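/- The monoid of initial exponents of invariants of A_3 on 3 variables with respect to the lexicographic order has infinitely many irreducible elements. Concretely, the monoid M of vectors u ∈ ℕ^3 satisfying (u_1-u_2, u_2-u_3, u_3-u_1) ≥_lex 0 and (u_1-u_3, u_2-u_1, u_3-u_2) ≥_lex 0 has infinitely many irreducible elements. -/
import Mathlib


/-- `(a,b,c) ≥_lex (0,0,0)` for integers. -/
def lex3Z (a b c : ℤ) : Prop := 0 < a ∨ (a = 0 ∧ 0 < b) ∨ (a = 0 ∧ b = 0 ∧ 0 ≤ c)

/-- The monoid of initial exponents of A₃-invariants for the lexicographic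
order x₁ > x₂ > x₃. -/
def monA3 : Set (Fin 3 → ℕ) :=
  {u | lex3Z ((u 0 : ℤ) - u 1) ((u 1 : ℤ) - u 2) ((u 2 : ℤ) - u 0) ∧
       lex3Z ((u 0 : ℤ) - u 2) ((u 1 : ℤ) - u 0) ((u 2 : ℤ) - u 1)}

lemma key (v : Fin 3 → ℕ) (hv : v ∈ monA3) (h1 : v 1 = 0) (hne : v ≠ 0) :
    v 2 < v 0 := by
  obtain ⟨_, h'⟩ := hv
  unfold lex3Z at h'
  rcases h' with hp | ⟨he, hp⟩ | ⟨he, he2, _⟩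
  · omega
  · omega
  · exfalso
    apply hne
    funext i
    fin_cases i <;> simp <;> omega

/-- this monoid has infinitely many irreducible elements. -/
theorem stmt_7 :
    {u : Fin 3 → ℕ | u ∈ monA3 ∧ u ≠ 0 ∧
      ¬ ∃ a ∈ monA3, ∃ b ∈ monA3, a ≠ 0 ∧ b ≠ 0 ∧ u = a + b}.Infinite := by
  apply Set.infinite_of_injective_forall_mem
    (f := fun k : ℕ => (![k + 1, 0, k] : Fin 3 → ℕ))
  case hi =>
    intro i j h
    have := congrFun h 2
    simpa using this
  case hf =>
    intro k
    refine ⟨⟨?_, ?_⟩, ?_, ?_⟩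
    · left; simp
    · left; simp
    · intro h
      have := congrFun h 0
      simp at this
    · rintro ⟨a, ha, b, hb, hane, hbne, hsum⟩
      have h0 := congrFun hsum 0
      have h1 := congrFun hsum 1
      have h2 := congrFun hsum 2
      simp [Pi.add_apply] at h0 h1 h2
      have ha1 : a 1 = 0 := by omega
      have hb1 : b 1 = 0 := by omega
      have hka := key a ha ha1 hane
      have hkb := key b hb hb1 hbne
      omega
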